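/- Let $\psi_1\colon E\to\Gamma_1$ and $\psi_2\colon E\to\Gamma_2$ be maps to abelian groups, $f_1\in\Gamma_1$, $f_2\in\Gamma_2$, and let $B\subseteq E$ satisfy $\psi_1(B)\ne f_1$ and $\psi_2(B)\ne f_2$. Let $X_1,\dots,X_4\subseteq B$ and $Y_1,\dots,Y_4\subseteq E\setminus B$ be pairwise disjoint nonempty subsets and set $B_{i,j} := (B\setminus(X_i\cup\dots\cup X_j))\cup(Y_i\cup\dots\cup Y_j)$ for $1\le i\le j\le 4$. Then there exist $1\le i\le j\le 4$ such that $\psi_1(B_{i,j})\ne f_1$ and $\psi_2(B_{i,j})\ne f_2$. -/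

import Mathlib

set_option maxRecDepth 10000
set_option maxHeartbeats 1000000
set_option linter.dupNamespace false

namespace Stmt5Aux



def ED : Fin 10 → Fin 5 × Fin 5 :=
  ![(0,1),(0,2),(0,3),(0,4),(1,2),(1,3),(1,4),(2,3),(2,4),(3,4)]

def sval (s : Bool) : ℤ := if s then 1 else -1

def toL (l : List (Fin 10 × Bool)) : List ((Fin 5 × Fin 5) × Bool) :=
  l.map fun q => (ED q.1, q.2)

def net : List ((Fin 5 × Fin 5) × Bool) → ℤ
  | [] => 0
  | (_, s) :: L => sval s + net L

def coef (v : Fin 5) : List ((Fin 5 × Fin 5) × Bool) → ℤ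
  | [] => 0
  | ((i, j), s) :: L =>
      sval s * ((if j = v then 1 else 0) - (if i = v then 1 else 0)) + coef v L

variable {Γ : Type*} [AddCommGroup Γ]

def F5 (a : Fin 5 → Γ) : List ((Fin 5 × Fin 5) × Bool) → Γ
  | [] => 0
  | ((i, j), s) :: L => sval s • (a j - a i) + F5 a L

lemma F5_eq_net (a : Fin 5 → Γ) (g : Γ) :
    ∀ L : List ((Fin 5 × Fin 5) × Bool),
      (∀ p ∈ L, a p.1.2 - a p.1.1 = g) → F5 a L = net L • g
  | [], _ => by simp [F5, net]
  | ((i, j), s) :: L, hed => by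
      have h1 : a j - a i = g := hed _ List.mem_cons_self
      have h2 := F5_eq_net a g L (fun p hp => hed p (List.mem_cons_of_mem _ hp))
      simp [F5, net, h1, h2, add_smul]

lemma F5_eq_coef (a : Fin 5 → Γ) :
    ∀ L : List ((Fin 5 × Fin 5) × Bool), F5 a L = ∑ v : Fin 5, coef v L • a v
  | [] => by simp [F5, coef]
  | ((i, j), s) :: L => by
      have h2 := F5_eq_coef a L
      have hterm : sval s • (a j - a i)
          = ∑ v : Fin 5,
              (sval s * ((if j = v then 1 else 0) - (if i = v then 1 else 0))) • a v := by
        simp [mul_sub, sub_smul, Finset.sum_sub_distrib, mul_ite, ite_smul, smul_sub,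
          Finset.sum_ite_eq]
      simp [F5, coef, h2, hterm, add_smul, Finset.sum_add_distrib]

lemma bridge (a : Fin 5 → Γ) (g : Γ) (L : List ((Fin 5 × Fin 5) × Bool))
    (hnet : net L = 1) (hcoef : ∀ v, coef v L = 0)
    (hed : ∀ p ∈ L, a p.1.2 - a p.1.1 = g) : g = 0 := by
  have h1 := F5_eq_net a g L hed
  have h2 := F5_eq_coef a L
  rw [hnet, one_smul] at h1
  rw [h1] at h2
  simpa [hcoef] using h2


def CL : List (Bool × List (Fin 10 × Bool)) := [
  (true, [((0 : Fin 10), true), ((4 : Fin 10), true), ((1 : Fin 10), false)]),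
  (false, [((0 : Fin 10), true), ((4 : Fin 10), true), ((1 : Fin 10), false)]),
  (true, [((0 : Fin 10), true), ((5 : Fin 10), true), ((2 : Fin 10), false)]),
  (false, [((0 : Fin 10), true), ((5 : Fin 10), true), ((2 : Fin 10), false)]),
  (true, [((0 : Fin 10), true), ((6 : Fin 10), true), ((3 : Fin 10), false)]),
  (false, [((0 : Fin 10), true), ((6 : Fin 10), true), ((3 : Fin 10), false)]),
  (true, [((1 : Fin 10), true), ((7 : Fin 10), true), ((2 : Fin 10), false)]),
  (false, [((1 : Fin 10), true), ((7 : Fin 10), true), ((2 : Fin 10), false)]),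
  (true, [((1 : Fin 10), true), ((8 : Fin 10), true), ((3 : Fin 10), false)]),
  (false, [((1 : Fin 10), true), ((8 : Fin 10), true), ((3 : Fin 10), false)]),
  (true, [((2 : Fin 10), true), ((9 : Fin 10), true), ((3 : Fin 10), false)]),
  (false, [((2 : Fin 10), true), ((9 : Fin 10), true), ((3 : Fin 10), false)]),
  (true, [((4 : Fin 10), true), ((7 : Fin 10), true), ((5 : Fin 10), false)]),
  (false, [((4 : Fin 10), true), ((7 : Fin 10), true), ((5 : Fin 10), false)]),
  (true, [((4 : Fin 10), true), ((8 : Fin 10), true), ((6 : Fin 10), false)]),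
  (false, [((4 : Fin 10), true), ((8 : Fin 10), true), ((6 : Fin 10), false)]),
  (true, [((5 : Fin 10), true), ((9 : Fin 10), true), ((6 : Fin 10), false)]),
  (false, [((5 : Fin 10), true), ((9 : Fin 10), true), ((6 : Fin 10), false)]),
  (true, [((7 : Fin 10), true), ((9 : Fin 10), true), ((8 : Fin 10), false)]),
  (false, [((7 : Fin 10), true), ((9 : Fin 10), true), ((8 : Fin 10), false)]),
  (true, [((0 : Fin 10), true), ((4 : Fin 10), true), ((8 : Fin 10), true), ((9 : Fin 10), false), ((2 : Fin 10), false)]),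
  (false, [((0 : Fin 10), true), ((4 : Fin 10), true), ((8 : Fin 10), true), ((9 : Fin 10), false), ((2 : Fin 10), false)]),
  (true, [((0 : Fin 10), true), ((5 : Fin 10), true), ((7 : Fin 10), false), ((8 : Fin 10), true), ((3 : Fin 10), false)]),
  (false, [((0 : Fin 10), true), ((5 : Fin 10), true), ((7 : Fin 10), false), ((8 : Fin 10), true), ((3 : Fin 10), false)]),
  (true, [((0 : Fin 10), true), ((5 : Fin 10), true), ((9 : Fin 10), true), ((8 : Fin 10), false), ((1 : Fin 10), false)]),
  (false, [((0 : Fin 10), true), ((5 : Fin 10), true), ((9 : Fin 10), true), ((8 : Fin 10), false), ((1 : Fin 10), false)]),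
  (true, [((0 : Fin 10), true), ((6 : Fin 10), true), ((8 : Fin 10), false), ((7 : Fin 10), true), ((2 : Fin 10), false)]),
  (false, [((0 : Fin 10), true), ((6 : Fin 10), true), ((8 : Fin 10), false), ((7 : Fin 10), true), ((2 : Fin 10), false)]),
  (true, [((0 : Fin 10), false), ((6 : Fin 10), false), ((9 : Fin 10), true), ((7 : Fin 10), true), ((1 : Fin 10), true)]),
  (false, [((0 : Fin 10), false), ((6 : Fin 10), false), ((9 : Fin 10), true), ((7 : Fin 10), true), ((1 : Fin 10), true)]),
  (true, [((1 : Fin 10), true), ((4 : Fin 10), false), ((5 : Fin 10), true), ((9 : Fin 10), true), ((3 : Fin 10), false)]),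
  (false, [((1 : Fin 10), true), ((4 : Fin 10), false), ((5 : Fin 10), true), ((9 : Fin 10), true), ((3 : Fin 10), false)]),
  (true, [((1 : Fin 10), false), ((4 : Fin 10), true), ((6 : Fin 10), false), ((9 : Fin 10), true), ((2 : Fin 10), true)]),
  (false, [((1 : Fin 10), false), ((4 : Fin 10), true), ((6 : Fin 10), false), ((9 : Fin 10), true), ((2 : Fin 10), true)]),
  (true, [((1 : Fin 10), true), ((7 : Fin 10), true), ((5 : Fin 10), false), ((6 : Fin 10), true), ((3 : Fin 10), false)]),
  (false, [((1 : Fin 10), true), ((7 : Fin 10), true), ((5 : Fin 10), false), ((6 : Fin 10), true), ((3 : Fin 10), false)]),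
  (true, [((1 : Fin 10), true), ((8 : Fin 10), true), ((6 : Fin 10), false), ((5 : Fin 10), true), ((2 : Fin 10), false)]),
  (false, [((1 : Fin 10), true), ((8 : Fin 10), true), ((6 : Fin 10), false), ((5 : Fin 10), true), ((2 : Fin 10), false)]),
  (true, [((2 : Fin 10), true), ((5 : Fin 10), false), ((4 : Fin 10), true), ((8 : Fin 10), true), ((3 : Fin 10), false)]),
  (false, [((2 : Fin 10), true), ((5 : Fin 10), false), ((4 : Fin 10), true), ((8 : Fin 10), true), ((3 : Fin 10), false)]),
  (true, [((2 : Fin 10), false), ((7 : Fin 10), true), ((4 : Fin 10), true), ((6 : Fin 10), false), ((3 : Fin 10), true)]),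
  (false, [((2 : Fin 10), false), ((7 : Fin 10), true), ((4 : Fin 10), true), ((6 : Fin 10), false), ((3 : Fin 10), true)])]


lemma CL_valid : ∀ p ∈ CL, net (toL p.2) = 1 ∧ ∀ v, coef v (toL p.2) = 0 := by decide

lemma core10 : ∀ b0 b1 b2 b3 b4 b5 b6 b7 b8 b9 : Bool,
    ∃ p ∈ CL, ∀ q ∈ p.2, ![b0,b1,b2,b3,b4,b5,b6,b7,b8,b9] q.1 = p.1 := by decide

lemma matrix_eval (c : Fin 10 → Bool) (k : Fin 10) :
    ![c 0, c 1, c 2, c 3, c 4, c 5, c 6, c 7, c 8, c 9] k = c k := by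
  fin_cases k <;> rfl

lemma core (c : Fin 10 → Bool) : ∃ p ∈ CL, ∀ q ∈ p.2, c q.1 = p.1 := by
  obtain ⟨p, hp, hq⟩ := core10 (c 0) (c 1) (c 2) (c 3) (c 4) (c 5) (c 6) (c 7) (c 8) (c 9)
  exact ⟨p, hp, fun q hqm => (matrix_eval c q.1) ▸ hq q hqm⟩


def pot {Γ : Type*} [AddCommGroup Γ] (u0 u1 u2 u3 : Γ) : Fin 5 → Γ
  | ⟨0, _⟩ => 0
  | ⟨1, _⟩ => u0
  | ⟨2, _⟩ => u0 + u1
  | ⟨3, _⟩ => u0 + u1 + u2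
  | ⟨4, _⟩ => u0 + u1 + u2 + u3

lemma key {Γ₁ Γ₂ : Type*} [AddCommGroup Γ₁] [AddCommGroup Γ₂]
    (g : Γ₁) (hg : g ≠ 0) (h : Γ₂) (hh : h ≠ 0)
    (u0 u1 u2 u3 : Γ₁) (v0 v1 v2 v3 : Γ₂)
    (H11 : u0 = g ∨ v0 = h)
    (H12 : u0 + u1 = g ∨ v0 + v1 = h)
    (H13 : u0 + u1 + u2 = g ∨ v0 + v1 + v2 = h)
    (H14 : u0 + u1 + u2 + u3 = g ∨ v0 + v1 + v2 + v3 = h)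
    (H22 : u1 = g ∨ v1 = h)
    (H23 : u1 + u2 = g ∨ v1 + v2 = h)
    (H24 : u1 + u2 + u3 = g ∨ v1 + v2 + v3 = h)
    (H33 : u2 = g ∨ v2 = h)
    (H34 : u2 + u3 = g ∨ v2 + v3 = h)
    (H44 : u3 = g ∨ v3 = h) : False := by
  classical
  have conv : ∀ {x x' : Γ₁} {y y' : Γ₂}, x = x' → y = y' →
      (x' = g ∨ y' = h) → (x = g ∨ y = h) := by rintro _ _ _ _ rfl rfl H; exact H
  set a : Fin 5 → Γ₁ := pot u0 u1 u2 u3 with ha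
  set b : Fin 5 → Γ₂ := pot v0 v1 v2 v3 with hb
  have HB : ∀ k : Fin 10,
      (a (ED k).2 - a (ED k).1 = g) ∨ (b (ED k).2 - b (ED k).1 = h) := by
    intro k
    fin_cases k
    · exact conv (x' := u0) (by show u0 - 0 = u0; abel) (by show v0 - 0 = v0; abel) H11
    · exact conv (x' := u0 + u1) (by show u0 + u1 - 0 = _; abel) (by show v0 + v1 - 0 = _; abel) H12
    · exact conv (x' := u0 + u1 + u2) (by show u0 + u1 + u2 - 0 = _; abel) (by show v0 + v1 + v2 - 0 = _; abel) H13
    · exact conv (x' := u0 + u1 + u2 + u3) (by show u0 + u1 + u2 + u3 - 0 = _; abel) (by show v0 + v1 + v2 + v3 - 0 = _; abel) H14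
    · exact conv (x' := u1) (by show u0 + u1 - u0 = _; abel) (by show v0 + v1 - v0 = _; abel) H22
    · exact conv (x' := u1 + u2) (by show u0 + u1 + u2 - u0 = _; abel) (by show v0 + v1 + v2 - v0 = _; abel) H23
    · exact conv (x' := u1 + u2 + u3) (by show u0 + u1 + u2 + u3 - u0 = _; abel) (by show v0 + v1 + v2 + v3 - v0 = _; abel) H24
    · exact conv (x' := u2) (by show u0 + u1 + u2 - (u0 + u1) = _; abel) (by show v0 + v1 + v2 - (v0 + v1) = _; abel) H33
    · exact conv (x' := u2 + u3) (by show u0 + u1 + u2 + u3 - (u0 + u1) = _; abel) (by show v0 + v1 + v2 + v3 - (v0 + v1) = _; abel) H34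
    · exact conv (x' := u3) (by show u0 + u1 + u2 + u3 - (u0 + u1 + u2) = _; abel) (by show v0 + v1 + v2 + v3 - (v0 + v1 + v2) = _; abel) H44
  set c : Fin 10 → Bool := fun k => if a (ED k).2 - a (ED k).1 = g then true else false with hc
  obtain ⟨p, hpCL, hcol⟩ := core c
  obtain ⟨hnet, hcoef⟩ := CL_valid p hpCL
  rcases p with ⟨col, l⟩
  dsimp only at hcol hnet hcoef
  cases col with
  | true =>
      refine hg (bridge a g (toL l) hnet hcoef ?_)
      intro q hq
      obtain ⟨q', hq', rfl⟩ := List.mem_map.mp hq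
      have hcq := hcol q' hq'
      rw [hc] at hcq
      dsimp only at hcq ⊢
      by_contra hno
      rw [if_neg hno] at hcq
      exact Bool.false_ne_true hcq
  | false =>
      refine hh (bridge b h (toL l) hnet hcoef ?_)
      intro q hq
      obtain ⟨q', hq', rfl⟩ := List.mem_map.mp hq
      have hcq := hcol q' hq'
      rw [hc] at hcq
      dsimp only at hcq ⊢
      by_cases hyes : a (ED q'.1).2 - a (ED q'.1).1 = g
      · rw [if_pos hyes] at hcq; simp at hcq
      · exact (HB q'.1).resolve_left hyes


section
variable {E Γ : Type*} [DecidableEq E] [AddCommGroup Γ]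

lemma sum_exchange (ψ : E → Γ) (B : Finset E) (X Y : Fin 4 → Finset E)
    (hXB : ∀ i, X i ⊆ B) (hYB : ∀ i, ∀ e ∈ Y i, e ∉ B)
    (hXdisj : ∀ i j, i ≠ j → Disjoint (X i) (X j))
    (hYdisj : ∀ i j, i ≠ j → Disjoint (Y i) (Y j))
    (S : Finset (Fin 4)) :
    ∑ e ∈ ((B \ S.biUnion X) ∪ S.biUnion Y), ψ e
      = ∑ e ∈ B, ψ e + ∑ k ∈ S, ((∑ e ∈ Y k, ψ e) - (∑ e ∈ X k, ψ e)) := by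
  have hXX : S.biUnion X ⊆ B := Finset.biUnion_subset.mpr fun k _ => hXB k
  have hd : Disjoint (B \ S.biUnion X) (S.biUnion Y) := by
    rw [Finset.disjoint_left]
    intro e he hy
    obtain ⟨k, _, hk⟩ := Finset.mem_biUnion.mp hy
    exact hYB k e hk (Finset.mem_sdiff.mp he).1
  rw [Finset.sum_union hd, Finset.sum_sdiff_eq_sub hXX,
    Finset.sum_biUnion (fun x _ y _ hxy => hXdisj x y hxy),
    Finset.sum_biUnion (fun x _ y _ hxy => hYdisj x y hxy),
    Finset.sum_sub_distrib]
  abel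

end

end Stmt5Aux



/-- Claim 5.4 (`c₂ ≤ 4`): with two labelings, a set `B` avoiding both forbidden values, and
four pairwise disjoint nonempty exchange pairs, some exchanged set avoids both values. -/
theorem stmt_5 {E Γ₁ Γ₂ : Type*} [DecidableEq E] [AddCommGroup Γ₁] [AddCommGroup Γ₂]
    (ψ₁ : E → Γ₁) (ψ₂ : E → Γ₂) (f₁ : Γ₁) (f₂ : Γ₂)
    (B : Finset E) (hB₁ : ∑ e ∈ B, ψ₁ e ≠ f₁) (hB₂ : ∑ e ∈ B, ψ₂ e ≠ f₂)
    (X Y : Fin 4 → Finset E)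
    (hXB : ∀ i, X i ⊆ B) (hYB : ∀ i, ∀ e ∈ Y i, e ∉ B)
    (hXne : ∀ i, (X i).Nonempty) (hYne : ∀ i, (Y i).Nonempty)
    (hXdisj : ∀ i j, i ≠ j → Disjoint (X i) (X j))
    (hYdisj : ∀ i j, i ≠ j → Disjoint (Y i) (Y j)) :
    ∃ i j : Fin 4, i ≤ j ∧
      ∑ e ∈ ((B \ (Finset.Icc i j).biUnion X) ∪ (Finset.Icc i j).biUnion Y), ψ₁ e ≠ f₁ ∧
      ∑ e ∈ ((B \ (Finset.Icc i j).biUnion X) ∪ (Finset.Icc i j).biUnion Y), ψ₂ e ≠ f₂ := by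
  classical
  by_contra hcon
  push_neg at hcon
  have H : ∀ i j : Fin 4, i ≤ j →
      (∑ e ∈ ((B \ (Finset.Icc i j).biUnion X) ∪ (Finset.Icc i j).biUnion Y), ψ₁ e = f₁) ∨
      (∑ e ∈ ((B \ (Finset.Icc i j).biUnion X) ∪ (Finset.Icc i j).biUnion Y), ψ₂ e = f₂) :=
    fun i j hij => or_iff_not_imp_left.mpr (hcon i j hij)
  have Hc : ∀ i j : Fin 4, i ≤ j →
      (∑ k ∈ Finset.Icc i j, ((∑ e ∈ Y k, ψ₁ e) - (∑ e ∈ X k, ψ₁ e)) = f₁ - ∑ e ∈ B, ψ₁ e) ∨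
      (∑ k ∈ Finset.Icc i j, ((∑ e ∈ Y k, ψ₂ e) - (∑ e ∈ X k, ψ₂ e)) = f₂ - ∑ e ∈ B, ψ₂ e) := by
    intro i j hij
    rcases H i j hij with hcase | hcase
    · left
      rw [Stmt5Aux.sum_exchange ψ₁ B X Y hXB hYB hXdisj hYdisj] at hcase
      exact eq_sub_of_add_eq' hcase
    · right
      rw [Stmt5Aux.sum_exchange ψ₂ B X Y hXB hYB hXdisj hYdisj] at hcase
      exact eq_sub_of_add_eq' hcase
  have hg : f₁ - ∑ e ∈ B, ψ₁ e ≠ 0 := sub_ne_zero.mpr (Ne.symm hB₁)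
  have hh : f₂ - ∑ e ∈ B, ψ₂ e ≠ 0 := sub_ne_zero.mpr (Ne.symm hB₂)
  have h00 := Hc 0 0 (by decide)
  have h01 := Hc 0 1 (by decide)
  have h02 := Hc 0 2 (by decide)
  have h03 := Hc 0 3 (by decide)
  have h11 := Hc 1 1 (by decide)
  have h12 := Hc 1 2 (by decide)
  have h13 := Hc 1 3 (by decide)
  have h22 := Hc 2 2 (by decide)
  have h23 := Hc 2 3 (by decide)
  have h33 := Hc 3 3 (by decide)
  rw [show Finset.Icc (0:Fin 4) 0 = {0} by decide, Finset.sum_singleton, Finset.sum_singleton] at h00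
  rw [show Finset.Icc (1:Fin 4) 1 = {1} by decide, Finset.sum_singleton, Finset.sum_singleton] at h11
  rw [show Finset.Icc (2:Fin 4) 2 = {2} by decide, Finset.sum_singleton, Finset.sum_singleton] at h22
  rw [show Finset.Icc (3:Fin 4) 3 = {3} by decide, Finset.sum_singleton, Finset.sum_singleton] at h33
  rw [show Finset.Icc (0:Fin 4) 1 = {0, 1} by decide,
    Finset.sum_pair (by decide), Finset.sum_pair (by decide)] at h01
  rw [show Finset.Icc (1:Fin 4) 2 = {1, 2} by decide,
    Finset.sum_pair (by decide), Finset.sum_pair (by decide)] at h12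
  rw [show Finset.Icc (2:Fin 4) 3 = {2, 3} by decide,
    Finset.sum_pair (by decide), Finset.sum_pair (by decide)] at h23
  rw [show Finset.Icc (0:Fin 4) 2 = {0, 1, 2} by decide,
    Finset.sum_insert (by decide), Finset.sum_pair (by decide),
    Finset.sum_insert (by decide), Finset.sum_pair (by decide)] at h02
  rw [show Finset.Icc (1:Fin 4) 3 = {1, 2, 3} by decide,
    Finset.sum_insert (by decide), Finset.sum_pair (by decide),
    Finset.sum_insert (by decide), Finset.sum_pair (by decide)] at h13
  rw [show Finset.Icc (0:Fin 4) 3 = Finset.univ by decide,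
    Fin.sum_univ_four, Fin.sum_univ_four] at h03
  rw [← add_assoc, ← add_assoc] at h02 h13
  exact Stmt5Aux.key _ hg _ hh _ _ _ _ _ _ _ _
    h00 h01 h02 h03 h11 h12 h13 h22 h23 h33
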